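/- Let f : ℝ² → ℝ be three times continuously differentiable with ‖D³f(x)‖ ≤ C₃ for all x ∈ ℝ², let α₀, α₁ be real filter coefficients and γ a rotation angle. Then for every ε > 0 there exists h₀ > 0 such that for all grid spacings h with 0 < h ≤ h₀ and every point p ∈ ℝ², the equivariance gap of the degree-one filter under rotation by γ around p satisfies |((α₀ + α₁)f(p) − (α₁/4)Σ_{e∈{±e₁,±e₂}} f(p + h R_γ e)) − ((α₀ + α₁)f(p) − (α₁/4)Σ_{e∈{±e₁,±e₂}} f(p + h e))| ≤ ε. That is, for sufficiently high image resolution the filter response is within any prescribed tolerance of being rotation invariant. -/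

import Mathlib

set_option maxHeartbeats 1000000

private lemma third_deriv_lip' (f : EuclideanSpace ℝ (Fin 2) → ℝ) (C₃ : ℝ)
    (hf : ContDiff ℝ 3 f)
    (hbound : ∀ x, ‖iteratedFDeriv ℝ 3 f x‖ ≤ C₃) (x y : EuclideanSpace ℝ (Fin 2)) :
    ‖fderiv ℝ (fderiv ℝ f) x - fderiv ℝ (fderiv ℝ f) y‖ ≤ C₃ * ‖x - y‖ := by
  have hg1 : ContDiff ℝ 2 (fderiv ℝ f) := hf.fderiv_right (by norm_num)
  have hA : ContDiff ℝ 1 (fderiv ℝ (fderiv ℝ f)) := hg1.fderiv_right (by norm_num)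
  have hAd : Differentiable ℝ (fderiv ℝ (fderiv ℝ f)) := hA.differentiable (by norm_num)
  refine convex_univ.norm_image_sub_le_of_norm_fderiv_le (𝕜 := ℝ) (f := fderiv ℝ (fderiv ℝ f)) (fun z _ => hAd z)
    (fun z _ => ?_) trivial trivial
  have h3 := hbound z
  rw [← norm_iteratedFDeriv_fderiv, ← norm_iteratedFDeriv_fderiv, ← norm_iteratedFDeriv_fderiv,
    norm_iteratedFDeriv_zero] at h3
  exact h3

private lemma second_order_stencil_bound (f : EuclideanSpace ℝ (Fin 2) → ℝ) (C₃ : ℝ)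
    (hf : ContDiff ℝ 3 f)
    (hbound : ∀ x, ‖iteratedFDeriv ℝ 3 f x‖ ≤ C₃)
    (p v : EuclideanSpace ℝ (Fin 2)) (hv : ‖v‖ = 1) (h : ℝ) (hh : 0 ≤ h) :
    |f (p + h • v) + f (p - h • v) - 2 * f p
      - h ^ 2 * (fderiv ℝ (fderiv ℝ f) p v v)| ≤ 2 * C₃ * h ^ 3 := by
  have hfd : Differentiable ℝ f := hf.differentiable (by norm_num)
  have hg1 : ContDiff ℝ 2 (fderiv ℝ f) := hf.fderiv_right (by norm_num)
  have hg1d : Differentiable ℝ (fderiv ℝ f) := hg1.differentiable (by norm_num)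
  set g1 := fderiv ℝ f with hg1def
  set A := fderiv ℝ g1 with hAdef
  set Q : ℝ := A p v v with hQdef
  have hline : ∀ t : ℝ, HasDerivAt (fun s : ℝ => p + s • v) v t := by
    intro t
    simpa using ((hasDerivAt_id t).smul_const v).const_add p
  have hlineneg : ∀ t : ℝ, HasDerivAt (fun s : ℝ => p - s • v) (-v) t := by
    intro t
    simpa [smul_neg, ← sub_eq_add_neg] using ((hasDerivAt_id t).smul_const (-v)).const_add p
  have hFpos : ∀ t : ℝ, HasDerivAt (fun s : ℝ => f (p + s • v)) (g1 (p + t • v) v) t := by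
    intro t
    exact (hfd (p + t • v)).hasFDerivAt.comp_hasDerivAt t (hline t)
  have hFneg : ∀ t : ℝ, HasDerivAt (fun s : ℝ => f (p - s • v)) (-(g1 (p - t • v) v)) t := by
    intro t
    exact ((hfd (p - t • v)).hasFDerivAt.comp_hasDerivAt t (hlineneg t)).congr_deriv (by rw [map_neg])
  have hGpos : ∀ t : ℝ, HasDerivAt (fun s : ℝ => g1 (p + s • v) v) (A (p + t • v) v v) t := by
    intro t
    have hc : HasDerivAt (fun s : ℝ => g1 (p + s • v)) (A (p + t • v) v) t :=
      (hg1d (p + t • v)).hasFDerivAt.comp_hasDerivAt t (hline t)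
    simpa using hc.clm_apply (hasDerivAt_const t v)
  have hGneg : ∀ t : ℝ, HasDerivAt (fun s : ℝ => g1 (p - s • v) v) (-(A (p - t • v) v v)) t := by
    intro t
    have hc : HasDerivAt (fun s : ℝ => g1 (p - s • v)) (A (p - t • v) (-v)) t :=
      (hg1d (p - t • v)).hasFDerivAt.comp_hasDerivAt t (hlineneg t)
    simpa using hc.clm_apply (hasDerivAt_const t v)
  set ψ : ℝ → ℝ := fun t => g1 (p + t • v) v - g1 (p - t • v) v - 2 * t * Q with hψdef
  have hψ : ∀ t : ℝ, HasDerivAt ψ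
      ((A (p + t • v) v v - Q) + (A (p - t • v) v v - Q)) t := by
    intro t
    have h2t : HasDerivAt (fun s : ℝ => 2 * s * Q) (2 * Q) t := by
      simpa [mul_comm, mul_assoc, mul_left_comm] using
        (hasDerivAt_mul_const (2 * Q) (x := t))
    have := ((hGpos t).sub (hGneg t)).sub h2t
    exact this.congr_deriv (by ring)
  have hψbound : ∀ t ∈ Set.Icc (0:ℝ) h,
      ‖(A (p + t • v) v v - Q) + (A (p - t • v) v v - Q)‖ ≤ 2 * C₃ * h := by
    intro t ht
    have key1 : ∀ x : EuclideanSpace ℝ (Fin 2), ‖x - p‖ ≤ h → |A x v v - Q| ≤ C₃ * h := by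
      intro x hx
      have hlip := third_deriv_lip' f C₃ hf hbound x p
      have : |A x v v - Q| = |((A x - A p) v) v| := by
        simp [hQdef, ContinuousLinearMap.sub_apply]
      rw [this]
      calc |((A x - A p) v) v| ≤ ‖(A x - A p) v‖ * ‖v‖ := ((A x - A p) v).le_opNorm v
        _ ≤ ‖A x - A p‖ * ‖v‖ * ‖v‖ := by
            gcongr
            exact (A x - A p).le_opNorm v
        _ = ‖A x - A p‖ := by rw [hv]; ring
        _ ≤ C₃ * ‖x - p‖ := hlip
        _ ≤ C₃ * h := by
            have hC : 0 ≤ C₃ := le_trans (norm_nonneg _) (hbound p)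
            exact mul_le_mul_of_nonneg_left hx hC
    have ht1 : ‖p + t • v - p‖ ≤ h := by
      simp [norm_smul, hv, abs_of_nonneg ht.1]
      exact ht.2
    have ht2 : ‖p - t • v - p‖ ≤ h := by
      simp [norm_smul, hv, abs_of_nonneg ht.1]
      exact ht.2
    calc ‖(A (p + t • v) v v - Q) + (A (p - t • v) v v - Q)‖
        ≤ ‖A (p + t • v) v v - Q‖ + ‖A (p - t • v) v v - Q‖ := norm_add_le _ _
      _ ≤ C₃ * h + C₃ * h := add_le_add (key1 _ ht1) (key1 _ ht2)
      _ = 2 * C₃ * h := by ring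
  have hψest : ∀ t ∈ Set.Icc (0:ℝ) h, |ψ t| ≤ 2 * C₃ * h * h := by
    intro t ht
    have := Convex.norm_image_sub_le_of_norm_hasDerivWithin_le
      (f := ψ) (f' := fun t => (A (p + t • v) v v - Q) + (A (p - t • v) v v - Q))
      (fun s hs => (hψ s).hasDerivWithinAt) (fun s hs => hψbound s hs)
      (convex_Icc 0 h) (Set.left_mem_Icc.mpr hh) ht
    have hψ0 : ψ 0 = 0 := by simp [hψdef]
    rw [hψ0, sub_zero, Real.norm_eq_abs, sub_zero, Real.norm_eq_abs] at this
    calc |ψ t| ≤ 2 * C₃ * h * |t| := this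
      _ ≤ 2 * C₃ * h * h := by
        have hC : 0 ≤ C₃ := le_trans (norm_nonneg _) (hbound p)
        have habs : |t| ≤ h := by rw [abs_of_nonneg ht.1]; exact ht.2
        exact mul_le_mul_of_nonneg_left habs (by positivity)
  set φ : ℝ → ℝ := fun t => f (p + t • v) + f (p - t • v) - t ^ 2 * Q with hφdef
  have hφ : ∀ t : ℝ, HasDerivAt φ (ψ t) t := by
    intro t
    have hsq : HasDerivAt (fun s : ℝ => s ^ 2 * Q) (2 * t ^ 1 * Q) t :=
      (hasDerivAt_pow 2 t).mul_const Q
    have := ((hFpos t).add (hFneg t)).sub hsq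
    exact this.congr_deriv (by simp [hψdef]; ring)
  have hfinal := Convex.norm_image_sub_le_of_norm_hasDerivWithin_le
    (f := φ) (f' := ψ)
    (fun s hs => (hφ s).hasDerivWithinAt) (fun s hs => hψest s hs)
    (convex_Icc 0 h) (Set.left_mem_Icc.mpr hh) (Set.right_mem_Icc.mpr hh)
  rw [Real.norm_eq_abs, Real.norm_eq_abs] at hfinal
  have heq : φ h - φ 0 = f (p + h • v) + f (p - h • v) - 2 * f p - h ^ 2 * Q := by
    simp [hφdef]; ring
  calc |f (p + h • v) + f (p - h • v) - 2 * f p - h ^ 2 * Q|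
      = |φ h - φ 0| := by rw [heq]
    _ ≤ 2 * C₃ * h * h * |h - 0| := hfinal
    _ = 2 * C₃ * h ^ 3 := by rw [sub_zero, abs_of_nonneg hh]; ring

open EuclideanSpace in
/-- For a three times continuously differentiable image signal `f : ℝ² → ℝ` with
uniformly bounded third derivative, and any prescribed tolerance `ε > 0`, there is a
resolution `h₀ > 0` such that for all grid spacings `0 < h ≤ h₀` and all points `p`, the
equivariance gap of the degree-one filter under a rotation of the stencil by `γ` around
`p` is at most `ε`. -/
theorem degree_one_filter_rotation_gap_small_for_high_resolution
    (f : EuclideanSpace ℝ (Fin 2) → ℝ) (C₃ : ℝ)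
    (hf : ContDiff ℝ 3 f)
    (hbound : ∀ x, ‖iteratedFDeriv ℝ 3 f x‖ ≤ C₃)
    (α₀ α₁ : ℝ) (γ : ℝ) :
    ∀ ε : ℝ, 0 < ε → ∃ h₀ : ℝ, 0 < h₀ ∧ ∀ h : ℝ, 0 < h → h ≤ h₀ →
      ∀ p : EuclideanSpace ℝ (Fin 2),
      |((α₀ + α₁) * f p
          - (α₁ / 4) *
            (f (p + h • (Real.cos γ • single (0 : Fin 2) (1 : ℝ) + Real.sin γ • single (1 : Fin 2) (1 : ℝ)))
              + f (p - h • (Real.cos γ • single (0 : Fin 2) (1 : ℝ) + Real.sin γ • single (1 : Fin 2) (1 : ℝ)))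
              + f (p + h • (-Real.sin γ • single (0 : Fin 2) (1 : ℝ) + Real.cos γ • single (1 : Fin 2) (1 : ℝ)))
              + f (p - h • (-Real.sin γ • single (0 : Fin 2) (1 : ℝ) + Real.cos γ • single (1 : Fin 2) (1 : ℝ)))))
        - ((α₀ + α₁) * f p
          - (α₁ / 4) *
            (f (p + h • single (0 : Fin 2) (1 : ℝ)) + f (p - h • single (0 : Fin 2) (1 : ℝ))
              + f (p + h • single (1 : Fin 2) (1 : ℝ)) + f (p - h • single (1 : Fin 2) (1 : ℝ))))|
        ≤ ε := by
  intro ε hε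
  have hC : 0 ≤ C₃ := le_trans (norm_nonneg _) (hbound 0)
  refine ⟨min 1 (ε / (8 * |α₁| * C₃ + 1)), lt_min one_pos (by positivity), ?_⟩
  intro h hh hhle p
  set e₁ : EuclideanSpace ℝ (Fin 2) := single (0 : Fin 2) (1 : ℝ) with he₁
  set e₂ : EuclideanSpace ℝ (Fin 2) := single (1 : Fin 2) (1 : ℝ) with he₂
  set v₁ : EuclideanSpace ℝ (Fin 2) := Real.cos γ • e₁ + Real.sin γ • e₂ with hv₁
  set v₂ : EuclideanSpace ℝ (Fin 2) := -Real.sin γ • e₁ + Real.cos γ • e₂ with hv₂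
  have hne₁ : ‖e₁‖ = 1 := by simp [he₁]
  have hne₂ : ‖e₂‖ = 1 := by simp [he₂]
  have hnv₁ : ‖v₁‖ = 1 := by
    rw [hv₁, he₁, he₂, EuclideanSpace.norm_eq]
    simp [EuclideanSpace.single_apply, Fin.sum_univ_two, Real.norm_eq_abs, sq_abs]
  have hnv₂ : ‖v₂‖ = 1 := by
    rw [hv₂, he₁, he₂, EuclideanSpace.norm_eq]
    simp [EuclideanSpace.single_apply, Fin.sum_univ_two, Real.norm_eq_abs, sq_abs]
  set B := fderiv ℝ (fderiv ℝ f) p with hB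
  have htr : B v₁ v₁ + B v₂ v₂ = B e₁ e₁ + B e₂ e₂ := by
    rw [hv₁, hv₂]
    simp only [map_add, map_smul, ContinuousLinearMap.add_apply, ContinuousLinearMap.smul_apply,
      smul_eq_mul, map_neg, ContinuousLinearMap.neg_apply, neg_smul]
    linear_combination (B e₁ e₁ + B e₂ e₂) * Real.sin_sq_add_cos_sq γ
  set E : EuclideanSpace ℝ (Fin 2) → ℝ :=
    fun v => f (p + h • v) + f (p - h • v) - 2 * f p - h ^ 2 * (B v v) with hE
  have hbd : ∀ v : EuclideanSpace ℝ (Fin 2), ‖v‖ = 1 → |E v| ≤ 2 * C₃ * h ^ 3 :=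
    fun v hv => second_order_stencil_bound f C₃ hf hbound p v hv h hh.le
  have hsplit :
      ((α₀ + α₁) * f p
          - (α₁ / 4) * (f (p + h • v₁) + f (p - h • v₁) + f (p + h • v₂) + f (p - h • v₂)))
        - ((α₀ + α₁) * f p
          - (α₁ / 4) * (f (p + h • e₁) + f (p - h • e₁) + f (p + h • e₂) + f (p - h • e₂)))
      = (α₁ / 4) * ((E e₁ + E e₂) - (E v₁ + E v₂)) := by
    simp only [hE]
    linear_combination (-(α₁ / 4) * h ^ 2) * htr
  rw [hsplit]
  have h1 : h ≤ 1 := le_trans hhle (min_le_left _ _)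
  have h2 : h ≤ ε / (8 * |α₁| * C₃ + 1) := le_trans hhle (min_le_right _ _)
  have hcube : h ^ 3 ≤ h := by
    calc h ^ 3 = h * (h * h) := by ring
      _ ≤ h * (1 * 1) := by
          apply mul_le_mul_of_nonneg_left _ hh.le
          exact mul_le_mul h1 h1 hh.le zero_le_one
      _ = h := by ring
  calc |(α₁ / 4) * ((E e₁ + E e₂) - (E v₁ + E v₂))|
      = |α₁| / 4 * |(E e₁ + E e₂) - (E v₁ + E v₂)| := by
        rw [abs_mul, abs_div]; norm_num
    _ ≤ |α₁| / 4 * (|E e₁| + |E e₂| + |E v₁| + |E v₂|) := by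
        apply mul_le_mul_of_nonneg_left _ (by positivity)
        calc |(E e₁ + E e₂) - (E v₁ + E v₂)| ≤ |E e₁ + E e₂| + |E v₁ + E v₂| := abs_sub _ _
          _ ≤ (|E e₁| + |E e₂|) + (|E v₁| + |E v₂|) := add_le_add (abs_add_le _ _) (abs_add_le _ _)
          _ = |E e₁| + |E e₂| + |E v₁| + |E v₂| := by ring
    _ ≤ |α₁| / 4 * (4 * (2 * C₃ * h ^ 3)) := by
        apply mul_le_mul_of_nonneg_left _ (by positivity)
        have := hbd e₁ hne₁
        have := hbd e₂ hne₂
        have := hbd v₁ hnv₁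
        have := hbd v₂ hnv₂
        linarith
    _ = 8 * |α₁| * C₃ * h ^ 3 / 4 * 4 / 4 * 4 / 4 := by ring
    _ ≤ ε := by
        have hstep : 8 * |α₁| * C₃ * h ^ 3 ≤ (8 * |α₁| * C₃ + 1) * h := by
          have : 8 * |α₁| * C₃ * h ^ 3 ≤ 8 * |α₁| * C₃ * h :=
            mul_le_mul_of_nonneg_left hcube (by positivity)
          nlinarith
        have hfin : (8 * |α₁| * C₃ + 1) * h ≤ ε := by
          rw [mul_comm]
          exact (le_div_iff₀ (by positivity : (0:ℝ) < 8 * |α₁| * C₃ + 1)).mp h2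
        calc 8 * |α₁| * C₃ * h ^ 3 / 4 * 4 / 4 * 4 / 4 = 8 * |α₁| * C₃ * h ^ 3 / 4 := by ring
          _ ≤ 8 * |α₁| * C₃ * h ^ 3 := by
              have : 0 ≤ 8 * |α₁| * C₃ * h ^ 3 := by positivity
              linarith
          _ ≤ (8 * |α₁| * C₃ + 1) * h := hstep
          _ ≤ ε := hfin
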